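/- Let h : ℝ → ℝ be a nondecreasing BV function with distributional derivative Dh = h'·dt + D^s h (Lebesgue decomposition). Then for every Lebesgue-measurable set I ⊂ ℝ, the image h(I) is measurable and H¹(h(I)) ≤ ν(I) + ∫_I h'(s) ds, where ν(I) := inf{D^s h(J) : J open, I ⊂ J}. -/

import Mathlib

open MeasureTheory Filter Topology Set

/-- The image of any set under a Stieltjes function has outer Lebesgue measure bounded
by the Stieltjes length of the set. -/
lemma stmt13_aux_length (h : StieltjesFunction ℝ) (s : Set ℝ) :
    volume ((h : ℝ → ℝ) '' s) ≤ h.length s := by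
  rw [StieltjesFunction.length_eq]
  refine le_iInf fun a => le_iInf fun b => le_iInf fun hs => ?_
  have : (h : ℝ → ℝ) '' s ⊆ Icc (h a) (h b) := by
    rintro _ ⟨x, hx, rfl⟩
    obtain ⟨h1, h2⟩ := hs ⟨hx, not_isBot x⟩
    exact ⟨h.mono h1.le, h.mono h2⟩
  calc volume ((h : ℝ → ℝ) '' s) ≤ volume (Icc (h a) (h b)) := measure_mono this
    _ = ENNReal.ofReal (h b - h a) := Real.volume_Icc

/-- The image of any set under a Stieltjes function has outer Lebesgue measure bounded
by the Stieltjes measure of the set. -/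
lemma stmt13_aux (h : StieltjesFunction ℝ) (s : Set ℝ) :
    volume ((h : ℝ → ℝ) '' s) ≤ h.measure s := by
  have houter : h.measure s = h.outer s := by
    rw [StieltjesFunction.measure_def]; rfl
  rw [houter, StieltjesFunction.outer, OuterMeasure.ofFunction_apply]
  refine le_iInf fun t => le_iInf fun hst => ?_
  have himg : (h : ℝ → ℝ) '' s ⊆ ⋃ i, (h : ℝ → ℝ) '' (t i) := by
    rw [← image_iUnion]
    exact Set.image_mono hst
  calc volume ((h : ℝ → ℝ) '' s) ≤ ∑' i, volume ((h : ℝ → ℝ) '' (t i)) :=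
        (measure_mono himg).trans (measure_iUnion_le _)
    _ ≤ ∑' i, h.length (t i) := ENNReal.tsum_le_tsum fun i => stmt13_aux_length h (t i)

/-- Let `h` be a nondecreasing (right-continuous, so that its
distributional derivative is the Stieltjes measure `Dh`) BV function, with Lebesgue
decomposition `Dh = g·dt + σ`, `σ ⟂ volume`. Then for every Lebesgue measurable `I ⊆ ℝ`,
`H¹(h(I)) ≤ ν(I) + ∫_I g`, where `ν(I) = inf{σ(J) : J open, I ⊆ J}`. -/
theorem stmt13 (h : StieltjesFunction ℝ) (σ : Measure ℝ) (g : ℝ → ENNReal)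
    (hg : Measurable g) (hsing : σ.MutuallySingular volume)
    (hdecomp : h.measure = σ + volume.withDensity g) :
    ∀ I : Set ℝ, MeasurableSet I →
      volume ((h : ℝ → ℝ) '' I) ≤
        (⨅ (J : Set ℝ) (_ : IsOpen J) (_ : I ⊆ J), σ J) + ∫⁻ x in I, g x := by
  intro I hI
  set μ : Measure ℝ := volume.withDensity g with hμ
  have hμapp : ∫⁻ x in I, g x = μ I := (withDensity_apply g hI).symm
  set ν : ENNReal := ⨅ (J : Set ℝ) (_ : IsOpen J) (_ : I ⊆ J), σ J with hν
  rw [hμapp]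
  -- `μ` is locally finite, hence outer regular
  have hμle : μ ≤ h.measure := by rw [hdecomp]; exact Measure.le_add_left le_rfl
  have : IsLocallyFiniteMeasure μ := Measure.isLocallyFiniteMeasure_of_le hμle
  have : μ.OuterRegular :=
    (Measure.WeaklyRegular.of_pseudoMetrizableSpace_secondCountable_of_locallyFinite
      μ).toOuterRegular
  refine ENNReal.le_of_forall_pos_le_add fun ε hε hlt => ?_
  have hνtop : ν ≠ ⊤ := (lt_of_le_of_lt le_self_add hlt).ne
  have hμtop : μ I ≠ ⊤ := (lt_of_le_of_lt le_add_self hlt).ne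
  have hεpos : (0 : ENNReal) < (ε : ENNReal) / 2 := by
    simp [ENNReal.div_pos_iff, hε.ne']
  -- choose an open set `J₀ ⊇ I` with `σ J₀ < ν + ε/2`
  have h1 : (⨅ (J : Set ℝ) (_ : IsOpen J) (_ : I ⊆ J), σ J) < ν + (ε : ENNReal) / 2 := by
    rw [← hν]; exact ENNReal.lt_add_right hνtop hεpos.ne'
  rw [iInf_lt_iff] at h1
  obtain ⟨J₀, h1⟩ := h1
  rw [iInf_lt_iff] at h1
  obtain ⟨hJ₀open, h1⟩ := h1
  rw [iInf_lt_iff] at h1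
  obtain ⟨hJ₀sub, hσJ₀⟩ := h1
  -- choose an open set `J₁ ⊇ I` with `μ J₁ < μ I + ε/2`
  obtain ⟨J₁, hJ₁sub, hJ₁open, hμJ₁⟩ :=
    Set.exists_isOpen_lt_of_lt (μ := μ) I (μ I + (ε : ENNReal) / 2)
      (ENNReal.lt_add_right hμtop hεpos.ne')
  -- combine
  have hJopen : IsOpen (J₀ ∩ J₁) := hJ₀open.inter hJ₁open
  have hJsub : I ⊆ J₀ ∩ J₁ := subset_inter hJ₀sub hJ₁sub
  calc volume ((h : ℝ → ℝ) '' I) ≤ volume ((h : ℝ → ℝ) '' (J₀ ∩ J₁)) :=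
        measure_mono (Set.image_mono hJsub)
    _ ≤ h.measure (J₀ ∩ J₁) := stmt13_aux h _
    _ = σ (J₀ ∩ J₁) + μ (J₀ ∩ J₁) := by rw [hdecomp]; rfl
    _ ≤ σ J₀ + μ J₁ := add_le_add (measure_mono inter_subset_left)
        (measure_mono inter_subset_right)
    _ ≤ (ν + (ε : ENNReal) / 2) + (μ I + (ε : ENNReal) / 2) :=
        add_le_add hσJ₀.le hμJ₁.le
    _ = ν + μ I + ((ε : ENNReal) / 2 + (ε : ENNReal) / 2) := by ring
    _ = ν + μ I + ε := by rw [ENNReal.add_halves]
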